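/- For the Riccati map Ricc_ϖ(v) = (I + (ϖ+v)^{-1})^{-1} with ϖ positive definite, for any positive semi-definite starting matrices, after one iteration all iterates v_n satisfy (I + ϖ^{-1})^{-1} ≤ v_n ≤ I, and after two iterations v_n ≤ (I + (ϖ+I)^{-1})^{-1}, equivalently (I + (ϖ+I))^{-1} ≤ I - v_n ≤ (I + ϖ)^{-1}. -/

import Mathlib

open Matrix

variable {n : Type*} [Fintype n] [DecidableEq n]

lemma myPosDef_conj {A T : Matrix n n ℝ} (hA : A.PosDef) (hT : IsUnit T) :
    (Tᴴ * A * T).PosDef := by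
  refine PosDef.of_dotProduct_mulVec_pos (isHermitian_conjTranspose_mul_mul T hA.1) fun x hx => ?_
  have hinj : Function.Injective T.mulVec := Matrix.mulVec_injective_iff_isUnit.mpr hT
  have hx' : T *ᵥ x ≠ 0 := fun h => hx <| hinj.eq_iff' (mulVec_zero _) |>.1 h
  simpa only [star_mulVec, dotProduct_mulVec, vecMul_vecMul] using hA.dotProduct_mulVec_pos hx'

open scoped MatrixOrder in
lemma mySqrt_isUnit {P : Matrix n n ℝ} (hP : P.PosDef) : IsUnit (CFC.sqrt P) := by
  have h := CFC.sqrt_mul_sqrt_self P hP.posSemidef.nonneg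
  have hdet : (CFC.sqrt P).det * (CFC.sqrt P).det = P.det := by
    rw [← det_mul, h]
  have hd : (CFC.sqrt P).det ≠ 0 := by
    intro h0
    rw [h0, zero_mul] at hdet
    exact hP.det_pos.ne' hdet.symm
  exact (isUnit_iff_isUnit_det _).2 (isUnit_iff_ne_zero.2 hd)

open scoped MatrixOrder in
lemma myInv_sub_one {C : Matrix n n ℝ} (hC : C.PosDef)
    (h : ((1 : Matrix n n ℝ) - C).PosSemidef) : (C⁻¹ - 1).PosSemidef := by
  set T := CFC.sqrt C⁻¹ with hTdef
  have hTpsd : T.PosSemidef := (CFC.sqrt_nonneg _).posSemidef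
  have hTT : T * T = C⁻¹ := CFC.sqrt_mul_sqrt_self _ hC.inv.posSemidef.nonneg
  have hTu : IsUnit T := mySqrt_isUnit hC.inv
  have hTd : IsUnit T.det := (isUnit_iff_isUnit_det _).1 hTu
  have hCd : IsUnit C.det := (isUnit_iff_isUnit_det _).1 hC.isUnit
  have hTh : Tᴴ = T := hTpsd.isHermitian
  have key : (T * ((1 : Matrix n n ℝ) - C) * T).PosSemidef := by
    have := h.mul_mul_conjTranspose_same T
    rwa [hTh] at this
  have hCT : T * C * T = 1 := by
    have hCeq : C = T⁻¹ * T⁻¹ := by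
      rw [← Matrix.mul_inv_rev, hTT, Matrix.nonsing_inv_nonsing_inv _ hCd]
    rw [hCeq]
    rw [Matrix.mul_assoc, Matrix.mul_assoc, Matrix.nonsing_inv_mul _ hTd, Matrix.mul_one,
      Matrix.mul_nonsing_inv _ hTd]
  have heq : T * ((1 : Matrix n n ℝ) - C) * T = C⁻¹ - 1 := by
    rw [Matrix.mul_sub, Matrix.mul_one, Matrix.sub_mul, hTT, hCT]
  rwa [heq] at key

open scoped MatrixOrder in
lemma myInv_antitone {A B : Matrix n n ℝ} (hA : A.PosDef) (hB : B.PosDef)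
    (h : (B - A).PosSemidef) : (A⁻¹ - B⁻¹).PosSemidef := by
  set T := CFC.sqrt B⁻¹ with hTdef
  have hTpsd : T.PosSemidef := (CFC.sqrt_nonneg _).posSemidef
  have hTT : T * T = B⁻¹ := CFC.sqrt_mul_sqrt_self _ hB.inv.posSemidef.nonneg
  have hTu : IsUnit T := mySqrt_isUnit hB.inv
  have hTd : IsUnit T.det := (isUnit_iff_isUnit_det _).1 hTu
  have hBd : IsUnit B.det := (isUnit_iff_isUnit_det _).1 hB.isUnit
  have hAd : IsUnit A.det := (isUnit_iff_isUnit_det _).1 hA.isUnit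
  have hTh : Tᴴ = T := hTpsd.isHermitian
  have hBT : T * B * T = 1 := by
    have hBeq : B = T⁻¹ * T⁻¹ := by
      rw [← Matrix.mul_inv_rev, hTT, Matrix.nonsing_inv_nonsing_inv _ hBd]
    rw [hBeq, Matrix.mul_assoc, Matrix.mul_assoc, Matrix.nonsing_inv_mul _ hTd, Matrix.mul_one,
      Matrix.mul_nonsing_inv _ hTd]
  have hC : (T * A * T).PosDef := by
    have := myPosDef_conj hA hTu
    rwa [hTh] at this
  have h1 : ((1 : Matrix n n ℝ) - T * A * T).PosSemidef := by
    have := h.mul_mul_conjTranspose_same T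
    rw [hTh] at this
    have heq : T * (B - A) * T = (1 : Matrix n n ℝ) - T * A * T := by
      rw [Matrix.mul_sub, Matrix.sub_mul, hBT]
    rwa [heq] at this
  have h2 : ((T * A * T)⁻¹ - 1).PosSemidef := myInv_sub_one hC h1
  have h3 := h2.mul_mul_conjTranspose_same T
  rw [hTh] at h3
  have hinv : (T * A * T)⁻¹ = T⁻¹ * A⁻¹ * T⁻¹ := by
    rw [Matrix.mul_inv_rev, Matrix.mul_inv_rev, Matrix.mul_assoc]
  have heq : T * ((T * A * T)⁻¹ - 1) * T = A⁻¹ - B⁻¹ := by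
    rw [hinv, Matrix.mul_sub, Matrix.sub_mul, Matrix.mul_one, hTT]
    congr 1
    rw [← Matrix.mul_assoc, ← Matrix.mul_assoc, Matrix.mul_nonsing_inv _ hTd, Matrix.one_mul,
      Matrix.mul_assoc, Matrix.nonsing_inv_mul _ hTd, Matrix.mul_one]
  rwa [heq] at h3

lemma myIdentity {A : Matrix n n ℝ} (hA : A.PosDef) :
    (1 : Matrix n n ℝ) - (1 + A⁻¹)⁻¹ = (1 + A)⁻¹ := by
  have hAd : IsUnit A.det := (isUnit_iff_isUnit_det _).1 hA.isUnit
  have h1A : ((1 : Matrix n n ℝ) + A).PosDef := Matrix.PosDef.posSemidef_add Matrix.PosSemidef.one hA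
  have h1Ad : IsUnit ((1 : Matrix n n ℝ) + A).det := (isUnit_iff_isUnit_det _).1 h1A.isUnit
  have h1 : (1 : Matrix n n ℝ) + A⁻¹ = (1 + A) * A⁻¹ := by
    rw [Matrix.add_mul, Matrix.one_mul, Matrix.mul_nonsing_inv _ hAd, add_comm]
  have h2 : ((1 : Matrix n n ℝ) + A⁻¹)⁻¹ = A * (1 + A)⁻¹ := by
    rw [h1, Matrix.mul_inv_rev, Matrix.nonsing_inv_nonsing_inv _ hAd]
  rw [h2]
  calc (1 : Matrix n n ℝ) - A * (1 + A)⁻¹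
      = (1 + A) * (1 + A)⁻¹ - A * (1 + A)⁻¹ := by rw [Matrix.mul_nonsing_inv _ h1Ad]
    _ = (1 + A)⁻¹ := by rw [← Matrix.sub_mul, add_sub_cancel_right, Matrix.one_mul]

lemma myStep1 {ϖ w : Matrix n n ℝ} (hϖ : ϖ.PosDef) (hw : w.PosSemidef) :
    ((1 + (ϖ + w)⁻¹)⁻¹ - (1 + ϖ⁻¹)⁻¹).PosSemidef ∧
      ((1 : Matrix n n ℝ) - (1 + (ϖ + w)⁻¹)⁻¹).PosSemidef := by
  have hB : (ϖ + w).PosDef := hϖ.add_posSemidef hw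
  have hBi : (ϖ + w)⁻¹.PosDef := hB.inv
  have h1B : ((1 : Matrix n n ℝ) + (ϖ + w)⁻¹).PosDef :=
    Matrix.PosDef.posSemidef_add Matrix.PosSemidef.one hBi
  have h1ϖ : ((1 : Matrix n n ℝ) + ϖ⁻¹).PosDef :=
    Matrix.PosDef.posSemidef_add Matrix.PosSemidef.one hϖ.inv
  constructor
  · have hstep : (ϖ⁻¹ - (ϖ + w)⁻¹).PosSemidef := by
      refine myInv_antitone hϖ hB ?_
      simpa using hw
    have hstep2 : ((1 + ϖ⁻¹) - (1 + (ϖ + w)⁻¹)).PosSemidef := by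
      have heq : (1 + ϖ⁻¹) - (1 + (ϖ + w)⁻¹) = ϖ⁻¹ - (ϖ + w)⁻¹ := by abel
      rwa [heq]
    exact myInv_antitone h1B h1ϖ hstep2
  · have hstep : (((1 : Matrix n n ℝ) + (ϖ + w)⁻¹) - 1).PosSemidef := by
      simpa using hBi.posSemidef
    have := myInv_antitone Matrix.PosDef.one h1B hstep
    have hone : (1 : Matrix n n ℝ)⁻¹ = 1 := by simp
    rwa [hone] at this

lemma myStep2 {ϖ w : Matrix n n ℝ} (hϖ : ϖ.PosDef) (hw : w.PosSemidef)
    (h1w : ((1 : Matrix n n ℝ) - w).PosSemidef) :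
    ((1 + (ϖ + 1)⁻¹)⁻¹ - (1 + (ϖ + w)⁻¹)⁻¹).PosSemidef := by
  have hB : (ϖ + w).PosDef := hϖ.add_posSemidef hw
  have hC : (ϖ + 1).PosDef := hϖ.add_posSemidef Matrix.PosSemidef.one
  have h1B : ((1 : Matrix n n ℝ) + (ϖ + w)⁻¹).PosDef :=
    Matrix.PosDef.posSemidef_add Matrix.PosSemidef.one hB.inv
  have h1C : ((1 : Matrix n n ℝ) + (ϖ + 1)⁻¹).PosDef :=
    Matrix.PosDef.posSemidef_add Matrix.PosSemidef.one hC.inv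
  have hstep : ((ϖ + w)⁻¹ - (ϖ + 1)⁻¹).PosSemidef := by
    refine myInv_antitone hB hC ?_
    have heq : (ϖ + 1) - (ϖ + w) = (1 : Matrix n n ℝ) - w := by abel
    rwa [heq]
  have hstep2 : ((1 + (ϖ + w)⁻¹) - (1 + (ϖ + 1)⁻¹)).PosSemidef := by
    have heq : (1 + (ϖ + w)⁻¹) - (1 + (ϖ + 1)⁻¹) = (ϖ + w)⁻¹ - (ϖ + 1)⁻¹ := by abel
    rwa [heq]
  exact myInv_antitone h1C h1B hstep2

/-- For the Riccati map `Ricc_ϖ(v) = (I + (ϖ+v)⁻¹)⁻¹` with `ϖ` positive definite and any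
positive semi-definite starting matrix, after one iteration all iterates satisfy
`(I + ϖ⁻¹)⁻¹ ≤ v_n ≤ I`, and after two iterations `v_n ≤ (I + (ϖ+I)⁻¹)⁻¹`, equivalently
`(I + (ϖ+I))⁻¹ ≤ I - v_n ≤ (I + ϖ)⁻¹` (Loewner order). -/
theorem riccati_iterates_bounds {d : ℕ} (ϖ : Matrix (Fin d) (Fin d) ℝ) (hϖ : ϖ.PosDef)
    (v : ℕ → Matrix (Fin d) (Fin d) ℝ) (hv0 : (v 0).PosSemidef)
    (hrec : ∀ n : ℕ, v (n + 1) = (1 + (ϖ + v n)⁻¹)⁻¹) :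
    (∀ n : ℕ, 1 ≤ n →
      (v n - (1 + ϖ⁻¹)⁻¹).PosSemidef ∧ ((1 : Matrix (Fin d) (Fin d) ℝ) - v n).PosSemidef) ∧
    (∀ n : ℕ, 2 ≤ n →
      ((1 + (ϖ + 1)⁻¹)⁻¹ - v n).PosSemidef ∧
      (((1 : Matrix (Fin d) (Fin d) ℝ) - v n) - (1 + (ϖ + 1))⁻¹).PosSemidef ∧
      ((1 + ϖ)⁻¹ - ((1 : Matrix (Fin d) (Fin d) ℝ) - v n)).PosSemidef) := by
  have hpsd : ∀ n, (v n).PosSemidef := by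
    intro n
    induction n with
    | zero => exact hv0
    | succ m ih =>
      rw [hrec]
      exact (Matrix.PosDef.posSemidef_add Matrix.PosSemidef.one
        (hϖ.add_posSemidef ih).inv).inv.posSemidef
  have claimA : ∀ n : ℕ, 1 ≤ n →
      (v n - (1 + ϖ⁻¹)⁻¹).PosSemidef ∧ ((1 : Matrix (Fin d) (Fin d) ℝ) - v n).PosSemidef := by
    intro n hn
    obtain ⟨m, rfl⟩ : ∃ m, n = m + 1 := ⟨n - 1, by omega⟩
    rw [hrec]
    exact myStep1 hϖ (hpsd m)
  refine ⟨claimA, fun n hn => ?_⟩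
  obtain ⟨m, rfl⟩ : ∃ m, n = m + 2 := ⟨n - 2, by omega⟩
  have h1vm : ((1 : Matrix (Fin d) (Fin d) ℝ) - v (m + 1)).PosSemidef :=
    (claimA (m + 1) (by omega)).2
  have first : ((1 + (ϖ + 1)⁻¹)⁻¹ - v (m + 2)).PosSemidef := by
    rw [hrec (m + 1)]
    exact myStep2 hϖ (hpsd (m + 1)) h1vm
  refine ⟨first, ?_, ?_⟩
  · have hid : (1 : Matrix (Fin d) (Fin d) ℝ) - (1 + (ϖ + 1)⁻¹)⁻¹ = (1 + (ϖ + 1))⁻¹ :=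
      myIdentity (hϖ.add_posSemidef Matrix.PosSemidef.one)
    have heq : ((1 : Matrix (Fin d) (Fin d) ℝ) - v (m + 2)) - (1 + (ϖ + 1))⁻¹
        = (1 + (ϖ + 1)⁻¹)⁻¹ - v (m + 2) := by
      rw [← hid]; abel
    rwa [heq]
  · have hid : (1 : Matrix (Fin d) (Fin d) ℝ) - (1 + ϖ⁻¹)⁻¹ = (1 + ϖ)⁻¹ := myIdentity hϖ
    have heq : (1 + ϖ)⁻¹ - ((1 : Matrix (Fin d) (Fin d) ℝ) - v (m + 2))
        = v (m + 2) - (1 + ϖ⁻¹)⁻¹ := by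
      rw [← hid]; abel
    rw [heq]
    exact (claimA (m + 2) (by omega)).1
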